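/- arXiv:2306.10393 — 5 statements merged into one kernel-verified Lean document; each statement's English description precedes it below -/
import Mathlib

section
/- Let p be a prime, let ξ_0, …, ξ_s be elements of the field ℚ_p of p-adic numbers, and for each n ∈ ℕ let L_n = l_{0,n}X_0 + ⋯ + l_{s,n}X_s be a linear form with integer coefficients l_{i,n} ∈ ℤ. If for every n one has 0 < (max_{0≤i≤s} |l_{i,n}|) · |l_{0,n}ξ_0 + ⋯ + l_{s,n}ξ_s|_p and this quantity tends to 0 as n → ∞, then at least one of ξ_0, …, ξ_s is irrational, i.e. does not lie in the image of ℚ under the canonical embedding ℚ ↪ ℚ_p. -/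
open Filter

private lemma int_norm_lower_bound (p : ℕ) [Fact p.Prime] (m : ℤ) (hm : m ≠ 0) :
    (1 : ℝ) ≤ |(m : ℝ)| * ‖(m : ℚ_[p])‖ := by
  have h1 : ‖(m : ℚ_[p])‖ = (padicNorm p (m : ℚ) : ℝ) := by
    rw [show ((m : ℚ_[p])) = (((m : ℚ)) : ℚ_[p]) by norm_cast]
    exact Padic.eq_padicNorm _
  have hm' : ((m : ℚ)) ≠ 0 := Int.cast_ne_zero.mpr hm
  rw [h1, padicNorm.eq_zpow_of_nonzero hm', padicValRat.of_int]
  set v : ℤ := (padicValInt p m : ℤ) with hv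
  have hp1 : (1 : ℝ) < (p : ℝ) := by
    exact_mod_cast (Fact.out : p.Prime).one_lt
  have hdvd : (p : ℤ) ^ padicValInt p m ∣ m := padicValInt_dvd m
  have hle : ((p : ℝ)) ^ (v : ℤ) ≤ |(m : ℝ)| := by
    have h2 : (p : ℤ) ^ padicValInt p m ≤ |m| :=
      Int.le_of_dvd (abs_pos.mpr hm) ((dvd_abs _ m).mpr hdvd)
    rw [hv, zpow_natCast]
    exact_mod_cast h2
  have hpv : (0 : ℝ) < (p : ℝ) ^ (v : ℤ) := zpow_pos (by linarith) _
  push_cast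
  rw [zpow_neg]
  calc (1 : ℝ) = (p : ℝ) ^ (v : ℤ) * ((p : ℝ) ^ (v : ℤ))⁻¹ :=
        (mul_inv_cancel₀ (ne_of_gt hpv)).symm
    _ ≤ |(m : ℝ)| * ((p : ℝ) ^ (v : ℤ))⁻¹ :=
        mul_le_mul_of_nonneg_right hle (inv_nonneg.mpr hpv.le)

/-- Lemma 2.1, classical p-adic irrationality criterion.
If `ξ 0, …, ξ s ∈ ℚ_p` and `L n = ∑ i, l n i • ξ i` are integer linear forms with
`0 < (max_i |l n i|) · ‖L n‖_p` for all `n` and this quantity tends to `0`,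
then some `ξ i` is irrational. -/
theorem padic_irrationality_criterion_classical
    (p : ℕ) [Fact p.Prime] (s : ℕ) (ξ : Fin (s + 1) → ℚ_[p])
    (l : ℕ → Fin (s + 1) → ℤ)
    (hpos : ∀ n : ℕ,
      0 < ((Finset.univ.sup fun i => (l n i).natAbs : ℕ) : ℝ) *
        ‖∑ i, (l n i : ℚ_[p]) * ξ i‖)
    (hlim : Tendsto
      (fun n : ℕ => ((Finset.univ.sup fun i => (l n i).natAbs : ℕ) : ℝ) *
        ‖∑ i, (l n i : ℚ_[p]) * ξ i‖) atTop (nhds 0)) :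
    ∃ i, ξ i ∉ Set.range ((↑) : ℚ → ℚ_[p]) := by
  by_contra hcon
  push_neg at hcon
  choose q hq using fun i => hcon i
  -- common denominator
  set b : ℕ := ∏ i, (q i).den with hb
  have hbpos : 0 < b := Finset.prod_pos fun i _ => (q i).den_pos
  -- integer numerators
  set a : Fin (s + 1) → ℤ :=
    fun i => (q i).num * ∏ j ∈ Finset.univ.erase i, ((q j).den : ℤ) with haa
  have ha : ∀ i, (a i : ℚ) = q i * (b : ℚ) := by
    intro i
    have hden : ((q i).den : ℚ) ≠ 0 := Nat.cast_ne_zero.mpr (q i).den_nz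
    have h1 : (q i) * ((q i).den : ℚ) = (q i).num :=
      ((div_eq_iff hden).mp (Rat.num_div_den (q i))).symm
    have h2 : (b : ℚ) = ((q i).den : ℚ) * ∏ j ∈ Finset.univ.erase i, ((q j).den : ℚ) := by
      rw [hb]
      push_cast
      exact (Finset.mul_prod_erase Finset.univ _ (Finset.mem_univ i)).symm
    rw [h2, haa]
    push_cast
    rw [← mul_assoc, h1]
  -- key identity
  have key : ∀ n, ((∑ i, l n i * a i : ℤ) : ℚ_[p]) =
      (b : ℚ_[p]) * ∑ i, (l n i : ℚ_[p]) * ξ i := by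
    intro n
    have h1 : ((∑ i, l n i * a i : ℤ) : ℚ) = (b : ℚ) * ∑ i, (l n i : ℚ) * q i := by
      push_cast
      rw [Finset.mul_sum]
      refine Finset.sum_congr rfl fun i _ => ?_
      rw [ha i]; ring
    calc ((∑ i, l n i * a i : ℤ) : ℚ_[p])
        = (((∑ i, l n i * a i : ℤ) : ℚ) : ℚ_[p]) := by norm_cast
      _ = (((b : ℚ) * ∑ i, (l n i : ℚ) * q i : ℚ) : ℚ_[p]) := by rw [h1]
      _ = (b : ℚ_[p]) * ∑ i, (l n i : ℚ_[p]) * ξ i := by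
          push_cast
          refine congrArg _ (Finset.sum_congr rfl fun i _ => ?_)
          rw [hq i]
  -- bound constant
  set A : ℝ := (∑ i, |(a i : ℝ)|) + 1 with hA
  have hApos : 0 < A := by
    have : (0 : ℝ) ≤ ∑ i, |(a i : ℝ)| := Finset.sum_nonneg fun i _ => abs_nonneg _
    linarith
  -- lower bound for each n
  have lower : ∀ n : ℕ, 1 / A ≤
      ((Finset.univ.sup fun i => (l n i).natAbs : ℕ) : ℝ) *
        ‖∑ i, (l n i : ℚ_[p]) * ξ i‖ := by
    intro n
    set M : ℕ := Finset.univ.sup fun i => (l n i).natAbs with hM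
    set L : ℚ_[p] := ∑ i, (l n i : ℚ_[p]) * ξ i with hL
    have hLnorm_pos : 0 < ‖L‖ := by
      rcases (mul_pos_iff.mp (hpos n)) with ⟨_, h⟩ | ⟨h, _⟩
      · exact h
      · exact absurd h (not_lt.mpr (Nat.cast_nonneg _))
    set N : ℤ := ∑ i, l n i * a i with hN
    have hNne : N ≠ 0 := by
      intro h0
      have : (b : ℚ_[p]) * L = 0 := by rw [← key n, ← hN, h0]; norm_cast
      have hbne : (b : ℚ_[p]) ≠ 0 := Nat.cast_ne_zero.mpr hbpos.ne'
      have : L = 0 := by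
        rcases mul_eq_zero.mp this with h | h
        · exact absurd h hbne
        · exact h
      rw [this, norm_zero] at hLnorm_pos
      exact lt_irrefl _ hLnorm_pos
    have hbnorm : ‖(b : ℚ_[p])‖ ≤ 1 := by
      have h := Padic.norm_int_le_one (p := p) (b : ℤ)
      rwa [Int.cast_natCast] at h
    have hNL : ‖(N : ℚ_[p])‖ ≤ ‖L‖ := by
      rw [key n]
      rw [Padic.padicNormE.mul]
      calc ‖(b : ℚ_[p])‖ * ‖L‖ ≤ 1 * ‖L‖ :=
            mul_le_mul_of_nonneg_right hbnorm (norm_nonneg _)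
        _ = ‖L‖ := one_mul _
    have h1 : (1 : ℝ) ≤ |(N : ℝ)| * ‖L‖ := by
      calc (1 : ℝ) ≤ |(N : ℝ)| * ‖(N : ℚ_[p])‖ := int_norm_lower_bound p N hNne
        _ ≤ |(N : ℝ)| * ‖L‖ := mul_le_mul_of_nonneg_left hNL (abs_nonneg _)
    -- |N| ≤ M * (∑ |a i|) ≤ M * A
    have hNbound : |(N : ℝ)| ≤ (M : ℝ) * A := by
      have hMi : ∀ i, |(l n i : ℝ)| ≤ (M : ℝ) := by
        intro i
        have : (l n i).natAbs ≤ M := by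
          rw [hM]
          exact Finset.le_sup (f := fun i => (l n i).natAbs) (Finset.mem_univ i)
        calc |(l n i : ℝ)| = ((l n i).natAbs : ℝ) := by push_cast [Nat.cast_natAbs]; ring
          _ ≤ (M : ℝ) := Nat.cast_le.mpr this
      calc |(N : ℝ)| = |∑ i, (l n i : ℝ) * (a i : ℝ)| := by rw [hN]; push_cast; ring_nf
        _ ≤ ∑ i, |(l n i : ℝ) * (a i : ℝ)| := Finset.abs_sum_le_sum_abs _ _
        _ ≤ ∑ i, (M : ℝ) * |(a i : ℝ)| := by
            refine Finset.sum_le_sum fun i _ => ?_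
            rw [abs_mul]
            exact mul_le_mul_of_nonneg_right (hMi i) (abs_nonneg _)
        _ = (M : ℝ) * ∑ i, |(a i : ℝ)| := by rw [Finset.mul_sum]
        _ ≤ (M : ℝ) * A := by
            refine mul_le_mul_of_nonneg_left ?_ (Nat.cast_nonneg _)
            rw [hA]; linarith
    have h2 : (1 : ℝ) ≤ ((M : ℝ) * ‖L‖) * A := by
      calc (1 : ℝ) ≤ |(N : ℝ)| * ‖L‖ := h1
        _ ≤ ((M : ℝ) * A) * ‖L‖ :=
            mul_le_mul_of_nonneg_right hNbound (norm_nonneg _)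
        _ = ((M : ℝ) * ‖L‖) * A := by ring
    rw [div_le_iff₀ hApos]
    exact h2
  -- contradiction with tendsto 0
  have hev : ∀ᶠ n in atTop,
      ((Finset.univ.sup fun i => (l n i).natAbs : ℕ) : ℝ) *
        ‖∑ i, (l n i : ℚ_[p]) * ξ i‖ < 1 / A :=
    hlim.eventually (gt_mem_nhds (by positivity))
  obtain ⟨n, hn⟩ := hev.exists
  exact absurd (lower n) (not_le.mpr hn)
end

section
/- Let p be a prime, let ξ_0, …, ξ_s ∈ ℚ_p with ξ_0 ≠ 0, and for each n ∈ ℕ let L_n = l_{0,n}X_0 + ⋯ + l_{s,n}X_s be a nonzero linear form with integer coefficients. Suppose there is an unbounded subset I ⊆ ℕ and for each n ∈ I a prime number l(n) such that, as n → ∞ along I: (1) (max_{0≤i≤s} |l_{i,n}|) · |l_{0,n}ξ_0 + ⋯ + l_{s,n}ξ_s|_p → 0; (2) for all n ∈ I one has v_{l(n)}(l_{0,n}) < v_{l(n)}(l_{i,n}) for every i = 1, …, s; and (3) l(n) → ∞. Then at least one of ξ_0, …, ξ_s is irrational (not in the image of ℚ ↪ ℚ_p). -/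
set_option maxHeartbeats 1000000

open Filter

lemma aux_inv_abs_le_norm (p : ℕ) [Fact p.Prime] (N : ℤ) (hN : N ≠ 0) :
    ((N.natAbs : ℝ))⁻¹ ≤ ‖(N : ℚ_[p])‖ := by
  have hp1 : 1 < p := (Fact.out : p.Prime).one_lt
  set v := padicValInt p N with hv
  have hdvd : (p : ℤ) ^ v ∣ N := padicValInt_dvd N
  have hdvd' : (p ^ v : ℕ) ∣ N.natAbs := by
    have := Int.natAbs_dvd_natAbs.mpr hdvd
    rwa [Int.natAbs_pow, Int.natAbs_natCast] at this
  have hle : p ^ v ≤ N.natAbs := Nat.le_of_dvd (Int.natAbs_pos.mpr hN) hdvd'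
  have hnorm : ‖(N : ℚ_[p])‖ = ((p : ℝ) ^ (v : ℤ))⁻¹ := by
    have : ((N : ℚ) : ℚ_[p]) = (N : ℚ_[p]) := by push_cast; ring
    rw [← this, Padic.eq_padicNorm,
      padicNorm.eq_zpow_of_nonzero (by exact_mod_cast hN)]
    rw [padicValRat.of_int, ← hv]
    push_cast
    rw [zpow_neg]
  rw [hnorm]
  apply inv_anti₀
  · positivity
  · exact_mod_cast hle

/-- new p-adic irrationality criterion.
Here the non-vanishing condition is replaced by a condition on the `l(n)`-adic
valuation of the coefficients (`emultiplicity` is the valuation on `ℤ` with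
value `⊤` at `0`). -/
theorem padic_irrationality_criterion_valuation
    (p : ℕ) [Fact p.Prime] (s : ℕ) (ξ : Fin (s + 1) → ℚ_[p])
    (hξ0 : ξ 0 ≠ 0)
    (l : ℕ → Fin (s + 1) → ℤ)
    (hl : ∀ n : ℕ, l n ≠ 0)
    (I : Set ℕ) (hI : ∀ m : ℕ, ∃ n ∈ I, m ≤ n)
    (lpr : ℕ → ℕ) (hlpr : ∀ n ∈ I, (lpr n).Prime)
    (h1 : Tendsto
      (fun n : ℕ => ((Finset.univ.sup fun i => (l n i).natAbs : ℕ) : ℝ) *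
        ‖∑ i, (l n i : ℚ_[p]) * ξ i‖) (atTop ⊓ Filter.principal I) (nhds 0))
    (h2 : ∀ n ∈ I, ∀ i : Fin (s + 1), i ≠ 0 →
      emultiplicity ((lpr n : ℤ)) (l n 0) < emultiplicity ((lpr n : ℤ)) (l n i))
    (h3 : Tendsto lpr (atTop ⊓ Filter.principal I) atTop) :
    ∃ i, ξ i ∉ Set.range ((↑) : ℚ → ℚ_[p]) := by
  by_contra hcon
  push_neg at hcon
  have hcon' : ∀ i, ∃ q : ℚ, (q : ℚ_[p]) = ξ i := fun i => hcon i
  choose r hr using hcon'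
  -- common denominator
  set d : ℕ := ∏ i, (r i).den with hd
  have hdpos : 0 < d := Finset.prod_pos fun i _ => (r i).pos
  set a : Fin (s + 1) → ℤ := fun i => (r i).num * (d / (r i).den : ℕ) with ha
  have hra : ∀ i, r i * (d : ℚ) = (a i : ℚ) := by
    intro i
    have hdvd : (r i).den ∣ d := Finset.dvd_prod_of_mem _ (Finset.mem_univ i)
    have hmul : ((d / (r i).den : ℕ) : ℚ) * ((r i).den : ℚ) = (d : ℚ) := by
      exact_mod_cast Nat.div_mul_cancel hdvd
    have hnum : r i * ((r i).den : ℚ) = ((r i).num : ℚ) := Rat.mul_den_eq_num (r i)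
    calc r i * (d : ℚ) = (r i * ((r i).den : ℚ)) * ((d / (r i).den : ℕ) : ℚ) := by
          rw [mul_assoc, mul_comm ((r i).den : ℚ), hmul]
      _ = ((r i).num : ℚ) * ((d / (r i).den : ℕ) : ℚ) := by rw [hnum]
      _ = (a i : ℚ) := by
          rw [show a i = (r i).num * ((d / (r i).den : ℕ) : ℤ) from rfl,
            Int.cast_mul, Int.cast_natCast]
  have hr0 : r 0 ≠ 0 := by
    intro h
    apply hξ0
    rw [← hr 0, h]; simp
  have ha0 : a 0 ≠ 0 := by
    rw [ha]
    apply mul_ne_zero (Rat.num_ne_zero.mpr hr0)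
    have : 0 < d / (r 0).den :=
      Nat.div_pos (Nat.le_of_dvd hdpos (Finset.dvd_prod_of_mem _ (Finset.mem_univ 0))) (r 0).pos
    exact_mod_cast this.ne'
  set A : ℕ := Finset.univ.sup fun i => (a i).natAbs with hA
  have hA1 : 1 ≤ A :=
    le_trans (Int.natAbs_pos.mpr ha0) (Finset.le_sup (f := fun i => (a i).natAbs) (Finset.mem_univ 0))
  set c : ℝ := (((s : ℝ) + 1) * (A : ℝ))⁻¹ with hc
  have hcpos : 0 < c := by
    rw [hc]
    have : (0:ℝ) < (A:ℝ) := by exact_mod_cast hA1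
    positivity
  -- the filter is nontrivial
  haveI hF : (atTop ⊓ Filter.principal I).NeBot := by
    rw [← frequently_mem_iff_neBot, frequently_atTop]
    intro m
    obtain ⟨n, hnI, hmn⟩ := hI m
    exact ⟨n, hmn, hnI⟩
  have ev1 := h1.eventually_lt_const hcpos
  have ev3 := h3.eventually_gt_atTop ((a 0).natAbs)
  have evI : ∀ᶠ n in atTop ⊓ Filter.principal I, n ∈ I :=
    eventually_inf_principal.mpr (Eventually.of_forall fun n h => h)
  obtain ⟨n, hlt, hqgt, hnI⟩ := (ev1.and (ev3.and evI)).exists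
  set q : ℕ := lpr n with hqdef
  have hqp : q.Prime := hlpr n hnI
  have hqZ : Prime (q : ℤ) := Int.prime_iff_natAbs_prime.mpr (by simpa using hqp)
  set N : ℤ := ∑ i, l n i * a i with hNdef
  -- N ≠ 0
  have hN0 : N ≠ 0 := by
    intro h0
    by_cases hs : ∀ i : Fin (s + 1), i = 0
    · have hNeq : N = (s + 1 : ℕ) * (l n 0 * a 0) := by
        rw [hNdef]
        calc ∑ i, l n i * a i = ∑ _i : Fin (s + 1), l n 0 * a 0 :=
              Finset.sum_congr rfl fun i _ => by rw [hs i]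
          _ = (s + 1 : ℕ) * (l n 0 * a 0) := by
              simp [Finset.sum_const, Finset.card_univ]
      rw [h0] at hNeq
      have hl00 : l n 0 = 0 := by
        rcases mul_eq_zero.mp hNeq.symm with h | h
        · exact absurd h (by positivity)
        · rcases mul_eq_zero.mp h with h' | h'
          · exact h'
          · exact absurd h' ha0
      exact hl n (funext fun i => by rw [hs i]; exact hl00)
    · push_neg at hs
      obtain ⟨j, hj⟩ := hs
      have htop : emultiplicity (q : ℤ) (l n 0) ≠ ⊤ :=
        ((h2 n hnI j hj).trans_le le_top).ne
      obtain ⟨k, hk⟩ : ∃ k : ℕ, (k : ℕ∞) = emultiplicity (q : ℤ) (l n 0) := by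
        lift emultiplicity (q : ℤ) (l n 0) to ℕ using htop with k hk
        exact ⟨k, rfl⟩
      have hdvd0 : (q : ℤ) ^ (k + 1) ∣ l n 0 * a 0 := by
        have hsum : l n 0 * a 0 = -∑ i ∈ Finset.univ.erase 0, l n i * a i := by
          have h' : l n 0 * a 0 + ∑ i ∈ Finset.univ.erase 0, l n i * a i = N :=
            Finset.add_sum_erase Finset.univ (fun i => l n i * a i) (Finset.mem_univ (0 : Fin (s+1)))
          rw [h0] at h'
          linarith
        rw [hsum, dvd_neg]
        apply Finset.dvd_sum
        intro i hi
        have hi0 : i ≠ 0 := Finset.ne_of_mem_erase hi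
        have hlt' : ((k : ℕ∞) + 1) ≤ emultiplicity (q : ℤ) (l n i) := by
          apply Order.add_one_le_of_lt
          rw [hk]
          exact h2 n hnI i hi0
        have : ((k + 1 : ℕ) : ℕ∞) ≤ emultiplicity (q : ℤ) (l n i) := by
          push_cast
          exact hlt'
        exact dvd_mul_of_dvd_left (pow_dvd_of_le_emultiplicity this) _
      have ha0nd : ¬(q : ℤ) ∣ a 0 := by
        intro hdvd
        have : q ∣ (a 0).natAbs := by
          have := Int.natAbs_dvd_natAbs.mpr hdvd
          simpa using this
        have := Nat.le_of_dvd (Int.natAbs_pos.mpr ha0) this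
        omega
      have hma : emultiplicity (q : ℤ) (a 0) = 0 :=
        emultiplicity_eq_zero.mpr ha0nd
      have hle := le_emultiplicity_of_pow_dvd hdvd0
      rw [emultiplicity_mul hqZ, ← hk, hma, add_zero] at hle
      have : ((k + 1 : ℕ) : ℕ∞) ≤ ((k : ℕ) : ℕ∞) := by exact_mod_cast hle
      rw [Nat.cast_le] at this
      omega
  -- quantitative bounds
  set M : ℕ := Finset.univ.sup fun i => (l n i).natAbs with hM
  have hM1 : 1 ≤ M := by
    obtain ⟨i, hi⟩ := Function.ne_iff.mp (hl n)
    exact le_trans (Int.natAbs_pos.mpr hi) (Finset.le_sup (f := fun i => (l n i).natAbs) (Finset.mem_univ i))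
  have hMR : (1 : ℝ) ≤ (M : ℝ) := by exact_mod_cast hM1
  have hAR : (1 : ℝ) ≤ (A : ℝ) := by exact_mod_cast hA1
  have hcoef : ∀ i, |(l n i : ℝ)| ≤ (M : ℝ) := by
    intro i
    rw [← Int.cast_abs]
    have : (l n i).natAbs ≤ M := Finset.le_sup (f := fun i => (l n i).natAbs) (Finset.mem_univ i)
    have h' : |l n i| ≤ (M : ℤ) := by
      rw [Int.abs_eq_natAbs]; exact_mod_cast this
    exact_mod_cast h'
  have hacoef : ∀ i, |(a i : ℝ)| ≤ (A : ℝ) := by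
    intro i
    rw [← Int.cast_abs]
    have : (a i).natAbs ≤ A := Finset.le_sup (f := fun i => (a i).natAbs) (Finset.mem_univ i)
    have h' : |a i| ≤ (A : ℤ) := by
      rw [Int.abs_eq_natAbs]; exact_mod_cast this
    exact_mod_cast h'
  have hNle : (N.natAbs : ℝ) ≤ ((s : ℝ) + 1) * (M : ℝ) * (A : ℝ) := by
    have h1' : (N.natAbs : ℝ) = |(N : ℝ)| := by rw [Nat.cast_natAbs, Int.cast_abs]
    rw [h1', hNdef]
    push_cast
    calc |∑ i, (l n i : ℝ) * (a i : ℝ)| ≤ ∑ i, |(l n i : ℝ) * (a i : ℝ)| :=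
          Finset.abs_sum_le_sum_abs _ _
      _ ≤ ∑ _i : Fin (s + 1), (M : ℝ) * (A : ℝ) := by
          apply Finset.sum_le_sum
          intro i _
          rw [abs_mul]
          exact mul_le_mul (hcoef i) (hacoef i) (abs_nonneg _)
            (le_trans zero_le_one hMR)
      _ = ((s : ℝ) + 1) * ((M : ℝ) * (A : ℝ)) := by
          rw [Finset.sum_const, Finset.card_univ, Fintype.card_fin, nsmul_eq_mul]
          push_cast
          ring
      _ = ((s : ℝ) + 1) * (M : ℝ) * (A : ℝ) := by ring
  -- the linear form equals N/d
  have hΛ : ∑ i, (l n i : ℚ_[p]) * ξ i = (N : ℚ_[p]) / (d : ℚ_[p]) := by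
    have hQ : (∑ i, (l n i : ℚ) * r i) = (N : ℚ) / (d : ℚ) := by
      rw [eq_div_iff (by exact_mod_cast hdpos.ne' : (d : ℚ) ≠ 0)]
      rw [Finset.sum_mul, hNdef]
      push_cast
      apply Finset.sum_congr rfl
      intro i _
      rw [mul_assoc, hra i]
    calc ∑ i, (l n i : ℚ_[p]) * ξ i
        = ((∑ i, (l n i : ℚ) * r i : ℚ) : ℚ_[p]) := by
          push_cast
          apply Finset.sum_congr rfl
          intro i _
          rw [hr i]
      _ = (N : ℚ_[p]) / (d : ℚ_[p]) := by rw [hQ]; push_cast; ring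
  have hd0 : ((d : ℚ_[p])) ≠ 0 := by exact_mod_cast hdpos.ne'
  have hnormd : ‖((d : ℚ_[p]))‖ ≤ 1 := by
    have h' := Padic.norm_int_le_one (p := p) (d : ℤ)
    rwa [show ((d : ℤ) : ℚ_[p]) = (d : ℚ_[p]) by push_cast; ring] at h'
  have hnormd0 : 0 < ‖((d : ℚ_[p]))‖ := norm_pos_iff.mpr hd0
  have hΛnorm : (N.natAbs : ℝ)⁻¹ ≤ ‖∑ i, (l n i : ℚ_[p]) * ξ i‖ := by
    rw [hΛ, norm_div]
    calc (N.natAbs : ℝ)⁻¹ ≤ ‖(N : ℚ_[p])‖ := aux_inv_abs_le_norm p N hN0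
      _ ≤ ‖(N : ℚ_[p])‖ / ‖((d : ℚ_[p]))‖ := by
          rw [le_div_iff₀ hnormd0]
          exact mul_le_of_le_one_right (norm_nonneg _) hnormd
  -- final contradiction
  have hNpos : (0 : ℝ) < (N.natAbs : ℝ) := by
    exact_mod_cast Int.natAbs_pos.mpr hN0
  have key : c ≤ (M : ℝ) * ‖∑ i, (l n i : ℚ_[p]) * ξ i‖ := by
    calc c = (M : ℝ) * (((s : ℝ) + 1) * (M : ℝ) * (A : ℝ))⁻¹ := by
          rw [hc]
          field_simp
      _ ≤ (M : ℝ) * ((N.natAbs : ℝ))⁻¹ := by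
          apply mul_le_mul_of_nonneg_left _ (by linarith)
          exact inv_anti₀ hNpos hNle
      _ ≤ (M : ℝ) * ‖∑ i, (l n i : ℚ_[p]) * ξ i‖ := by
          apply mul_le_mul_of_nonneg_left hΛnorm (by linarith)
  simp only [hM] at key
  exact absurd hlt (not_lt.mpr key)
end

section
/- Let ξ_0, …, ξ_s ∈ ℝ with ξ_0 ≠ 0, and for each n ∈ ℕ let L_n = l_{0,n}X_0 + ⋯ + l_{s,n}X_s be a nonzero linear form with integer coefficients. Suppose there is an unbounded subset I ⊆ ℕ and for each n ∈ I a prime number l(n) such that, as n → ∞ along I: (1) |l_{0,n}ξ_0 + ⋯ + l_{s,n}ξ_s| → 0; (2) for all n ∈ I one has v_{l(n)}(l_{0,n}) < v_{l(n)}(l_{i,n}) for every i = 1, …, s; and (3) l(n) → ∞. Then at least one of ξ_0, …, ξ_s is irrational. -/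
open Filter

/-- Archimedean analogue of the new irrationality criterion. -/
theorem real_irrationality_criterion_valuation
    (s : ℕ) (ξ : Fin (s + 1) → ℝ)
    (hξ0 : ξ 0 ≠ 0)
    (l : ℕ → Fin (s + 1) → ℤ)
    (hl : ∀ n : ℕ, l n ≠ 0)
    (I : Set ℕ) (hI : ∀ m : ℕ, ∃ n ∈ I, m ≤ n)
    (lpr : ℕ → ℕ) (hlpr : ∀ n ∈ I, (lpr n).Prime)
    (h1 : Tendsto (fun n : ℕ => |∑ i, (l n i : ℝ) * ξ i|)
      (atTop ⊓ Filter.principal I) (nhds 0))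
    (h2 : ∀ n ∈ I, ∀ i : Fin (s + 1), i ≠ 0 →
      emultiplicity ((lpr n : ℤ)) (l n 0) < emultiplicity ((lpr n : ℤ)) (l n i))
    (h3 : Tendsto lpr (atTop ⊓ Filter.principal I) atTop) :
    ∃ i, Irrational (ξ i) := by
  by_contra hcon
  push_neg at hcon
  have hq : ∀ i, ∃ r : ℚ, (r : ℝ) = ξ i := by
    intro i
    have := hcon i
    rw [Irrational] at this
    push_neg at this
    rcases this with ⟨r, hr⟩
    exact ⟨r, hr⟩
  choose r hr using hq
  set b : ℕ := ∏ i, (r i).den with hb_def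
  have hbpos : 0 < b := Finset.prod_pos fun i _ => (r i).pos
  set a : Fin (s + 1) → ℤ := fun i => (r i).num * ((b / (r i).den : ℕ) : ℤ) with ha_def
  have key : ∀ i, ((a i : ℚ)) = r i * b := by
    intro i
    have hden : (r i).den ∣ b := Finset.dvd_prod_of_mem _ (Finset.mem_univ i)
    have h1 : ((b / (r i).den : ℕ) : ℚ) * (r i).den = b := by
      rw [← Nat.cast_mul, Nat.div_mul_cancel hden]
    have h2 : ((r i).num : ℚ) = r i * (r i).den := (Rat.mul_den_eq_num _).symm
    have h3 : ((a i : ℚ)) = ((r i).num : ℚ) * ((b / (r i).den : ℕ) : ℚ) := by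
      simp only [ha_def, Int.cast_mul, Int.cast_natCast]
    rw [h3, h2, mul_assoc, mul_comm ((r i).den : ℚ), h1]
  have keyR : ∀ i, ((a i : ℝ)) = ξ i * b := by
    intro i
    have := key i
    have : ((a i : ℝ)) = ((r i : ℝ)) * b := by exact_mod_cast congrArg (Rat.cast : ℚ → ℝ) this
    rwa [hr i] at this
  have ha0 : a 0 ≠ 0 := by
    intro h
    have := keyR 0
    rw [h] at this
    simp at this
    rcases this with h' | h'
    · exact hξ0 h'
    · exact (Nat.cast_ne_zero.mpr hbpos.ne').symm h'.symm
  -- the filter is NeBot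
  have hF : (atTop ⊓ 𝓟 I).NeBot := by
    rw [inf_principal_neBot_iff]
    intro U hU
    rcases mem_atTop_sets.mp hU with ⟨m, hm⟩
    rcases hI m with ⟨n, hnI, hmn⟩
    exact ⟨n, hm n hmn, hnI⟩
  have hb1 : (0 : ℝ) < 1 / b := by positivity
  have EA : ∀ᶠ n in atTop ⊓ 𝓟 I, |∑ i, (l n i : ℝ) * ξ i| < 1 / b :=
    h1.eventually_lt_const hb1
  have EB : ∀ᶠ n in atTop ⊓ 𝓟 I, (a 0).natAbs < lpr n := h3.eventually_gt_atTop _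
  have EC : ∀ᶠ n in atTop ⊓ 𝓟 I, n ∈ I :=
    eventually_inf_principal.mpr (Eventually.of_forall fun _ h => h)
  obtain ⟨n, ⟨hA, hB⟩, hnI⟩ := ((EA.and EB).and EC).exists
  -- the integer sum is zero
  set N : ℤ := ∑ i, l n i * a i with hN_def
  have hNR : ((N : ℝ)) = (∑ i, (l n i : ℝ) * ξ i) * b := by
    push_cast [hN_def]
    rw [Finset.sum_mul]
    refine Finset.sum_congr rfl fun i _ => ?_
    rw [keyR i]; ring
  have hNabs : |(N : ℝ)| < 1 := by
    rw [hNR, abs_mul, abs_of_nonneg (by positivity : (0:ℝ) ≤ (b:ℝ))]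
    calc |∑ i, (l n i : ℝ) * ξ i| * b < (1 / b) * b := by
          apply mul_lt_mul_of_pos_right hA
          exact_mod_cast hbpos
      _ = 1 := by field_simp
  have hN0 : N = 0 := by
    have h5 : |N| < 1 := by exact_mod_cast (by rwa [← Int.cast_abs] at hNabs : ((|N| : ℤ) : ℝ) < 1)
    have h6 := abs_lt.mp h5
    omega
  rcases Nat.eq_zero_or_pos s with hs | hs
  · subst hs
    have hne : l n 0 ≠ 0 := by
      intro h
      apply hl n
      funext i
      have : i = 0 := Subsingleton.elim (α := Fin 1) i 0
      rw [this, h]; rfl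
    rw [hN_def] at hN0
    rw [Fin.sum_univ_one] at hN0
    exact (mul_ne_zero hne ha0) hN0
  · set p : ℤ := (lpr n : ℤ) with hp_def
    have hp : Prime p := Nat.prime_iff_prime_int.mp (hlpr n hnI)
    set i₁ : Fin (s + 1) := ⟨1, by omega⟩ with hi1_def
    have hi₁0 : i₁ ≠ 0 := by
      intro h
      have := congrArg Fin.val h
      simp [hi1_def] at this
    have hlt := h2 n hnI i₁ hi₁0
    have hne_top : emultiplicity p (l n 0) ≠ ⊤ := hlt.ne_top
    obtain ⟨k, hk⟩ := WithTop.ne_top_iff_exists.mp hne_top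
    -- p^(k+1) divides each l n i for i ≠ 0
    have hdvd : ∀ i : Fin (s + 1), i ≠ 0 → p ^ (k + 1) ∣ l n i := by
      intro i hi
      apply pow_dvd_of_le_emultiplicity
      have := h2 n hnI i hi
      rw [← hk] at this
      push_cast
      exact Order.add_one_le_of_lt this
    -- hence p^(k+1) ∣ l n 0 * a 0
    have hsum : l n 0 * a 0 = -∑ i : Fin s, l n i.succ * a i.succ := by
      have := hN0
      rw [hN_def, Fin.sum_univ_succ] at this
      linarith [this]
    have hdvd2 : p ^ (k + 1) ∣ l n 0 * a 0 := by
      rw [hsum, dvd_neg]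
      apply Finset.dvd_sum
      intro i _
      exact dvd_mul_of_dvd_left (hdvd i.succ (Fin.succ_ne_zero i)) _
    -- but emultiplicity of l n 0 * a 0 is k
    have hnd : ¬ p ∣ a 0 := by
      intro h
      have hle : p ≤ |a 0| := Int.le_of_dvd (abs_pos.mpr ha0) ((dvd_abs _ _).mpr h)
      have hlt2 : |a 0| < p := by
        have h9 : ((a 0).natAbs : ℤ) < ((lpr n : ℕ) : ℤ) := by exact_mod_cast hB
        rw [Int.abs_eq_natAbs]
        exact h9
      omega
    have hmul : emultiplicity p (l n 0 * a 0) = (k : ℕ∞) := by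
      rw [emultiplicity_mul hp, ← hk, emultiplicity_eq_zero.mpr hnd]
      rfl
    have h7 := le_emultiplicity_of_pow_dvd hdvd2
    rw [hmul] at h7
    have h8 : (k + 1 : ℕ) ≤ k := by exact_mod_cast h7
    omega
end

section
/- Let p be a prime, n a non-negative integer and x ∈ ℚ_p. Then the sequence N ↦ p^{−N} · Σ_{k=0}^{p^N − 1} (x + k)^n converges in ℚ_p, and its limit equals 𝔹_n(x), the value at x of the n-th Bernoulli polynomial. In particular, for x = 0 the limit equals the n-th Bernoulli number B_n. -/
open Filter Polynomial

lemma bernoulli_comp_X_add_one (n : ℕ) :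
    (Polynomial.bernoulli (n + 1)).comp (X + 1) =
      Polynomial.bernoulli (n + 1) + ((n : ℚ) + 1) • X ^ n := by
  apply Polynomial.funext
  intro x
  rw [eval_comp]
  simp only [eval_add, eval_X, eval_one, eval_smul, eval_pow, smul_eq_mul]
  rw [add_comm x 1, Polynomial.bernoulli_eval_one_add]
  push_cast
  ring_nf

lemma aeval_bernoulli_add_one {p : ℕ} [Fact p.Prime] (n : ℕ) (y : ℚ_[p]) :
    aeval (y + 1) (Polynomial.bernoulli (n + 1)) =
      aeval y (Polynomial.bernoulli (n + 1)) + ((n : ℚ_[p]) + 1) * y ^ n := by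
  have h := congrArg (aeval y) (bernoulli_comp_X_add_one n)
  rw [aeval_comp] at h
  simp only [map_add, aeval_X, map_one, map_smul, map_pow, smul_eq_mul] at h
  rw [h, Rat.smul_def]
  push_cast
  ring

lemma sum_pow_eq_bernoulli_diff {p : ℕ} [Fact p.Prime] (n : ℕ) (x : ℚ_[p]) (M : ℕ) :
    ((n : ℚ_[p]) + 1) * ∑ k ∈ Finset.range M, (x + (k : ℚ_[p])) ^ n =
      aeval (x + M) (Polynomial.bernoulli (n + 1)) - aeval x (Polynomial.bernoulli (n + 1)) := by
  induction M with
  | zero => simp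
  | succ M ih =>
      rw [Finset.sum_range_succ, mul_add, ih]
      have := aeval_bernoulli_add_one n (x + (M : ℚ_[p]))
      push_cast
      rw [← add_assoc, this]
      ring

/-- Volkenborn integral of `(x+t)^n` is the Bernoulli polynomial.
For a prime `p`, `n ∈ ℕ` and `x ∈ ℚ_p`, the Volkenborn sums
`p^{-N} ∑_{k<p^N} (x+k)^n` converge to `𝔹_n(x)`; in particular for `x = 0`
they converge to the Bernoulli number `B_n`. -/
theorem volkenborn_integral_pow_eq_bernoulli
    (p : ℕ) [Fact p.Prime] (n : ℕ) :
    (∀ x : ℚ_[p],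
      Tendsto (fun N : ℕ =>
          ((p : ℚ_[p]) ^ N)⁻¹ * ∑ k ∈ Finset.range (p ^ N), (x + (k : ℚ_[p])) ^ n)
        atTop (nhds (Polynomial.aeval x (Polynomial.bernoulli n)))) ∧
    Tendsto (fun N : ℕ =>
        ((p : ℚ_[p]) ^ N)⁻¹ * ∑ k ∈ Finset.range (p ^ N), ((k : ℚ_[p])) ^ n)
      atTop (nhds ((bernoulli n : ℚ) : ℚ_[p])) := by
  have hp : (p : ℚ_[p]) ≠ 0 := Nat.cast_ne_zero.mpr (Fact.out : p.Prime).ne_zero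
  have hpow : ∀ N : ℕ, ((p : ℚ_[p]) ^ N) ≠ 0 := fun N => pow_ne_zero _ hp
  -- p^N → 0
  have hto0 : Tendsto (fun N : ℕ => (p : ℚ_[p]) ^ N) atTop (nhds 0) := by
    rw [tendsto_zero_iff_norm_tendsto_zero]
    simp only [norm_pow, Padic.norm_p]
    exact tendsto_pow_atTop_nhds_zero_of_lt_one (by positivity)
      (inv_lt_one_of_one_lt₀ (by exact_mod_cast (Fact.out : p.Prime).one_lt))
  have main : ∀ x : ℚ_[p],
      Tendsto (fun N : ℕ =>
          ((p : ℚ_[p]) ^ N)⁻¹ * ∑ k ∈ Finset.range (p ^ N), (x + (k : ℚ_[p])) ^ n)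
        atTop (nhds (Polynomial.aeval x (Polynomial.bernoulli n))) := by
    intro x
    set Q : Polynomial ℚ_[p] :=
      (Polynomial.bernoulli (n + 1)).map (algebraMap ℚ ℚ_[p]) with hQ
    have hderiv : HasDerivAt (fun y => Q.eval y) (Q.derivative.eval x) x :=
      Q.hasDerivAt x
    have hQderiv : Q.derivative.eval x = ((n : ℚ_[p]) + 1) * aeval x (Polynomial.bernoulli n) := by
      simp [hQ, derivative_map, Polynomial.derivative_bernoulli_add_one, Polynomial.map_mul,
        eval_mul, eval_map, aeval_def]
    have htend : Tendsto (fun N : ℕ => x + (p : ℚ_[p]) ^ N) atTop (nhdsWithin x {x}ᶜ) := by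
      rw [tendsto_nhdsWithin_iff]
      constructor
      · simpa using (tendsto_const_nhds.add hto0)
      · filter_upwards with N
        simp only [Set.mem_compl_iff, Set.mem_singleton_iff]
        intro h
        exact hpow N (by rwa [add_eq_left] at h)
    have hslope := (hasDerivAt_iff_tendsto_slope.mp hderiv).comp htend
    have heq : ∀ N : ℕ,
        slope (fun y => Q.eval y) x (x + (p : ℚ_[p]) ^ N) =
          ((n : ℚ_[p]) + 1) * (((p : ℚ_[p]) ^ N)⁻¹ *
            ∑ k ∈ Finset.range (p ^ N), (x + (k : ℚ_[p])) ^ n) := by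
      intro N
      rw [slope_def_field]
      have hsum := sum_pow_eq_bernoulli_diff n x (p ^ N)
      have hc : ((p ^ N : ℕ) : ℚ_[p]) = (p : ℚ_[p]) ^ N := by push_cast; ring
      rw [hc] at hsum
      have : Q.eval (x + (p : ℚ_[p]) ^ N) - Q.eval x =
          ((n : ℚ_[p]) + 1) * ∑ k ∈ Finset.range (p ^ N), (x + (k : ℚ_[p])) ^ n := by
        rw [hQ]
        simp only [eval_map, ← aeval_def]
        rw [← hsum]
      rw [add_sub_cancel_left, this]
      field_simp
    have hn1 : ((n : ℚ_[p]) + 1) ≠ 0 := by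
      exact_mod_cast (Nat.cast_add_one_ne_zero n : ((n : ℚ_[p]) + 1) ≠ 0)
    have h2 : Tendsto (fun N : ℕ => ((n : ℚ_[p]) + 1) * (((p : ℚ_[p]) ^ N)⁻¹ *
        ∑ k ∈ Finset.range (p ^ N), (x + (k : ℚ_[p])) ^ n)) atTop
        (nhds (((n : ℚ_[p]) + 1) * aeval x (Polynomial.bernoulli n))) := by
      rw [← hQderiv]
      exact hslope.congr heq
    have h3 := h2.const_mul (((n : ℚ_[p]) + 1)⁻¹)
    simp only [← mul_assoc, inv_mul_cancel₀ hn1, one_mul] at h3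
    exact h3
  refine ⟨main, ?_⟩
  have h0 := main 0
  simp only [zero_add] at h0
  convert h0 using 2
  rw [show (0 : ℚ_[p]) = algebraMap ℚ ℚ_[p] 0 by simp,
    aeval_algebraMap_apply_eq_algebraMap_eval, Polynomial.bernoulli_eval_zero]
  rfl
end

section
/- Let n be a non-negative integer and let a, b be integers with b > 0. Consider the polynomial F(t) = b^n · (∏_{q | b, q prime} q^{⌊n/(q−1)⌋}) · (t + a/b)_n / n!, where (α)_n = α(α+1)⋯(α+n−1) is the Pochhammer symbol. Then for any integer k′ ∈ {0, 1, …, n−1}, any integer k ∈ ℤ and any integer λ ≥ 0, the polynomial F(t)/(t + a/b + k′) (which is again a polynomial with rational coefficients, since t + a/b + k′ divides F) satisfies: d_n^{λ+1} · (1/λ!) · (d/dt)^λ ( F(t)/(t + a/b + k′) ) evaluated at t = −k is an integer. Here d_n = lcm(1, 2, …, n). -/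
open Polynomial

/-- `d_n = lcm(1, 2, …, n)`. -/
def dd (n : ℕ) : ℕ := (Finset.Icc 1 n).lcm id


open Finset in
lemma dd_ne_zero (n : ℕ) : dd n ≠ 0 := by
  intro h
  rw [dd, Finset.lcm_eq_zero_iff] at h
  simp only [Set.mem_image, Finset.mem_coe, Finset.mem_Icc, id] at h
  omega


open Finset in

lemma filter_dvd_card_ge (n m : ℕ) (hm : 0 < m) (a' b : ℤ) (h : IsCoprime (m : ℤ) b) :
    n / m ≤ ((Finset.range n).filter (fun i : ℕ => (m : ℤ) ∣ a' + (i : ℤ) * b)).card := by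
  obtain ⟨u, v, huv⟩ := h
  set r : ℤ := (-a' * v) % m with hr
  have hr0 : 0 ≤ r := Int.emod_nonneg _ (by positivity)
  have hrm : r < m := Int.emod_lt_of_pos _ (by exact_mod_cast hm)
  set r0 : ℕ := r.toNat with hr0def
  have hr0m : r0 < m := by omega
  have hrcast : (r0 : ℤ) = r := Int.toNat_of_nonneg hr0
  have h1 : (m : ℤ) ∣ (r0 : ℤ) - (-a' * v) := by
    refine ⟨-((-a' * v) / m), ?_⟩
    rw [hrcast, hr, Int.emod_def]; ring
  obtain ⟨w, hw⟩ := h1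
  have hdvd : ∀ t : ℕ, (m : ℤ) ∣ a' + ((r0 : ℤ) + t * m) * b := by
    intro t
    refine ⟨a' * u + (w + t) * b, ?_⟩
    linear_combination b * hw - a' * huv
  rw [← Finset.card_range (n / m)]
  apply Finset.card_le_card_of_injOn (fun t => r0 + t * m)
  · intro t ht
    simp only [Finset.mem_coe, Finset.mem_range] at ht
    simp only [Finset.mem_coe, Finset.mem_filter, Finset.mem_range]
    constructor
    · have : (t + 1) * m ≤ (n / m) * m := Nat.mul_le_mul_right _ ht
      have h2 : n / m * m ≤ n := Nat.div_mul_le_self n m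
      nlinarith
    · have := hdvd t
      push_cast
      convert this using 2
  · intro t1 _ t2 _ he
    simp only at he
    have : t1 * m = t2 * m := by omega
    exact Nat.eq_of_mul_eq_mul_right hm this


open Polynomial Finset in
lemma asc_prod (n : ℕ) : ascPochhammer ℚ n = ∏ i ∈ Finset.range n, (X + C (i : ℚ)) := by
  induction n with
  | zero => simp
  | succ m ih =>
    rw [ascPochhammer_succ_right, ih, Finset.prod_range_succ]
    simp [Polynomial.C_eq_natCast]


open Finset in
lemma key_dvd (n lam : ℕ) (hn : 0 < n) (b : ℤ) (hb : b ≠ 0) (a' : ℤ) (S : Finset ℕ)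
    (hS : S ⊆ Finset.range n) (hcard : n ≤ S.card + (lam + 1)) :
    ((n.factorial : ℤ)) ∣ (dd n : ℤ) ^ (lam + 1) * (b : ℤ) ^ (lam + 1) *
      ((∏ q ∈ b.natAbs.primeFactors, (q : ℕ) ^ (n / (q - 1)) : ℕ) : ℤ) *
      ∏ i ∈ S, (a' + (i : ℤ) * b) := by
  set T : ℤ := ∏ i ∈ S, (a' + (i : ℤ) * b) with hTdef
  by_cases hT : T = 0
  · rw [hT, mul_zero]; exact dvd_zero _
  set PN : ℕ := ∏ q ∈ b.natAbs.primeFactors, (q : ℕ) ^ (n / (q - 1)) with hPN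
  have hPNne : PN ≠ 0 := by
    rw [hPN]
    exact Finset.prod_ne_zero_iff.mpr fun q hq =>
      pow_ne_zero _ (Nat.Prime.ne_zero (Nat.prime_of_mem_primeFactors hq))
  have hbne : b.natAbs ≠ 0 := Int.natAbs_ne_zero.mpr hb
  -- pass to ℕ
  rw [Int.natCast_dvd]
  have habs : ((dd n : ℤ) ^ (lam + 1) * (b : ℤ) ^ (lam + 1) * (PN : ℤ) * T).natAbs
      = dd n ^ (lam + 1) * b.natAbs ^ (lam + 1) * PN * T.natAbs := by
    simp [Int.natAbs_mul, Int.natAbs_pow]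
  rw [habs]
  have hTabs : T.natAbs ≠ 0 := Int.natAbs_ne_zero.mpr hT
  have hRHSne : dd n ^ (lam + 1) * b.natAbs ^ (lam + 1) * PN * T.natAbs ≠ 0 :=
    mul_ne_zero (mul_ne_zero (mul_ne_zero (pow_ne_zero _ (dd_ne_zero n))
      (pow_ne_zero _ hbne)) hPNne) hTabs
  rw [← Nat.factorization_le_iff_dvd (Nat.factorial_ne_zero n) hRHSne]
  rw [Finsupp.le_def]
  intro p
  by_cases hp : p.Prime
  swap
  · simp [Nat.factorization_eq_zero_of_not_prime _ hp]
  haveI : Fact p.Prime := ⟨hp⟩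
  -- factorization of the RHS
  have hfac : (dd n ^ (lam + 1) * b.natAbs ^ (lam + 1) * PN * T.natAbs).factorization p
      = (lam + 1) * (dd n).factorization p + (lam + 1) * b.natAbs.factorization p
        + PN.factorization p + T.natAbs.factorization p := by
    rw [Nat.factorization_mul (mul_ne_zero (mul_ne_zero (pow_ne_zero _ (dd_ne_zero n))
          (pow_ne_zero _ hbne)) hPNne) hTabs,
        Nat.factorization_mul (mul_ne_zero (pow_ne_zero _ (dd_ne_zero n))
          (pow_ne_zero _ hbne)) hPNne,
        Nat.factorization_mul (pow_ne_zero _ (dd_ne_zero n)) (pow_ne_zero _ hbne),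
        Nat.factorization_pow, Nat.factorization_pow]
    simp [mul_comm]
  rw [hfac, Nat.factorization_def _ hp]
  by_cases hpb : p ∣ b.natAbs
  · -- p divides b: use the big prime-power factor PN
    have hple : padicValNat p n.factorial ≤ n / (p - 1) := by
      have h1 := sub_one_mul_padicValNat_factorial (p := p) n
      have h2 : (p - 1) * padicValNat p n.factorial ≤ n := by omega
      have hp1 : 0 < p - 1 := by have := hp.two_le; omega
      exact Nat.le_div_iff_mul_le hp1 |>.mpr (by rw [Nat.mul_comm]; omega)
    have hmem : p ∈ b.natAbs.primeFactors := Nat.mem_primeFactors.mpr ⟨hp, hpb, hbne⟩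
    have hdvdPN : p ^ (n / (p - 1)) ∣ PN := Finset.dvd_prod_of_mem _ hmem
    have hPNfac : n / (p - 1) ≤ PN.factorization p :=
      (Nat.Prime.pow_dvd_iff_le_factorization hp hPNne).mp hdvdPN
    omega
  · -- p coprime to b : Legendre + AP counting
    set L : ℕ := Nat.log p n with hL
    have hLeg : padicValNat p n.factorial = ∑ j ∈ Finset.Ico 1 (L + 1), n / p ^ j :=
      padicValNat_factorial (by omega)
    -- d_n has p-adic valuation ≥ L
    have hdd : L ≤ (dd n).factorization p := by
      apply (Nat.Prime.pow_dvd_iff_le_factorization hp (dd_ne_zero n)).mp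
      have hmem : p ^ L ∈ Finset.Icc 1 n := by
        rw [Finset.mem_Icc]
        exact ⟨Nat.one_le_pow _ _ hp.pos, Nat.pow_log_le_self p hn.ne'⟩
      have := Finset.dvd_lcm (f := id) hmem; exact this
    -- coprimality
    have hcop : Nat.Coprime p b.natAbs := (Nat.Prime.coprime_iff_not_dvd hp).mpr hpb
    -- valuation of T
    have hTfac : ∑ j ∈ Finset.Ico 1 (L + 1), (n / p ^ j - (lam + 1))
        ≤ T.natAbs.factorization p := by
      have hprodAbs : T.natAbs = ∏ i ∈ S, (a' + (i : ℤ) * b).natAbs := by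
        rw [hTdef]; exact map_prod Int.natAbsHom _ _
      have hfacne : ∀ i ∈ S, (a' + (i : ℤ) * b).natAbs ≠ 0 := by
        intro i hi
        rw [Int.natAbs_ne_zero]
        exact Finset.prod_ne_zero_iff.mp hT i hi
      have hTsum : T.natAbs.factorization p
          = ∑ i ∈ S, ((a' + (i : ℤ) * b).natAbs).factorization p := by
        rw [hprodAbs, Nat.factorization_prod hfacne]
        simp
      -- for each i, valuation bounded below by count of j with p^j ∣ ·
      have hcount : ∀ i ∈ S,
          ((Finset.Ico 1 (L + 1)).filter
            (fun j => p ^ j ∣ (a' + (i : ℤ) * b).natAbs)).card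
            ≤ ((a' + (i : ℤ) * b).natAbs).factorization p := by
        intro i hi
        have hsub : ((Finset.Ico 1 (L + 1)).filter
              (fun j => p ^ j ∣ (a' + (i : ℤ) * b).natAbs))
            ⊆ Finset.Icc 1 (((a' + (i : ℤ) * b).natAbs).factorization p) := by
          intro j hj
          simp only [Finset.mem_filter, Finset.mem_Ico] at hj
          rw [Finset.mem_Icc]
          exact ⟨hj.1.1, (Nat.Prime.pow_dvd_iff_le_factorization hp (hfacne i hi)).mp hj.2⟩
        calc _ ≤ _ := Finset.card_le_card hsub
          _ = _ := by rw [Nat.card_Icc]; omega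
      -- double counting
      have hswap : ∑ i ∈ S, ((Finset.Ico 1 (L + 1)).filter
            (fun j => p ^ j ∣ (a' + (i : ℤ) * b).natAbs)).card
          = ∑ j ∈ Finset.Ico 1 (L + 1), (S.filter
            (fun i : ℕ => p ^ j ∣ (a' + (i : ℤ) * b).natAbs)).card := by
        simp_rw [Finset.card_filter]
        exact Finset.sum_comm
      -- per-j lower bound via AP counting
      have hperj : ∀ j ∈ Finset.Ico 1 (L + 1), n / p ^ j - (lam + 1)
          ≤ (S.filter (fun i : ℕ => p ^ j ∣ (a' + (i : ℤ) * b).natAbs)).card := by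
        intro j _
        have hcop2 : IsCoprime ((p ^ j : ℕ) : ℤ) b := by
          rw [Int.isCoprime_iff_gcd_eq_one]
          simpa [Int.gcd, Int.natAbs_pow] using (Nat.Coprime.pow_left j hcop)
        have h1 := filter_dvd_card_ge n (p ^ j) (pow_pos hp.pos j) a' b hcop2
        have hiff : ∀ i : ℕ, ((p ^ j : ℕ) : ℤ) ∣ a' + (i : ℤ) * b
            ↔ p ^ j ∣ (a' + (i : ℤ) * b).natAbs := fun i => Int.natCast_dvd
        have hsub2 : (Finset.range n).filter
              (fun i : ℕ => p ^ j ∣ (a' + (i : ℤ) * b).natAbs)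
            ⊆ (S.filter (fun i : ℕ => p ^ j ∣ (a' + (i : ℤ) * b).natAbs)) ∪ (Finset.range n \ S) := by
          intro i hi
          simp only [Finset.mem_filter, Finset.mem_union, Finset.mem_sdiff] at hi ⊢
          by_cases his : i ∈ S
          · exact Or.inl ⟨his, hi.2⟩
          · exact Or.inr ⟨hi.1, his⟩
        have hcard2 : ((Finset.range n).filter
              (fun i : ℕ => p ^ j ∣ (a' + (i : ℤ) * b).natAbs)).card
            ≤ (S.filter (fun i : ℕ => p ^ j ∣ (a' + (i : ℤ) * b).natAbs)).card + (lam + 1) := by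
          calc _ ≤ _ := Finset.card_le_card hsub2
            _ ≤ _ := Finset.card_union_le _ _
            _ ≤ _ := by
              have : (Finset.range n \ S).card = n - S.card := by
                rw [Finset.card_sdiff_of_subset hS, Finset.card_range]
              omega
        have heq : (Finset.range n).filter (fun i : ℕ => ((p ^ j : ℕ) : ℤ) ∣ a' + (i : ℤ) * b)
            = (Finset.range n).filter (fun i : ℕ => p ^ j ∣ (a' + (i : ℤ) * b).natAbs) :=
          Finset.filter_congr (fun i _ => by rw [hiff i])
        have h1' : n / p ^ j ≤ ((Finset.range n).filter
            (fun i : ℕ => p ^ j ∣ (a' + (i : ℤ) * b).natAbs)).card := heq ▸ h1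
        omega
      calc ∑ j ∈ Finset.Ico 1 (L + 1), (n / p ^ j - (lam + 1))
          ≤ ∑ j ∈ Finset.Ico 1 (L + 1), (S.filter
            (fun i : ℕ => p ^ j ∣ (a' + (i : ℤ) * b).natAbs)).card :=
            Finset.sum_le_sum hperj
        _ = _ := hswap.symm
        _ ≤ ∑ i ∈ S, ((a' + (i : ℤ) * b).natAbs).factorization p :=
            Finset.sum_le_sum hcount
        _ = _ := hTsum.symm
    -- combine
    have hcount2 : ∑ j ∈ Finset.Ico 1 (L + 1), n / p ^ j
        ≤ L * (lam + 1) + ∑ j ∈ Finset.Ico 1 (L + 1), (n / p ^ j - (lam + 1)) := by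
      have : ∀ j ∈ Finset.Ico 1 (L + 1), n / p ^ j ≤ (lam + 1) + (n / p ^ j - (lam + 1)) :=
        fun j _ => by omega
      calc ∑ j ∈ Finset.Ico 1 (L + 1), n / p ^ j
          ≤ ∑ j ∈ Finset.Ico 1 (L + 1), ((lam + 1) + (n / p ^ j - (lam + 1))) :=
            Finset.sum_le_sum this
        _ = _ := by
            rw [Finset.sum_add_distrib, Finset.sum_const, Nat.card_Ico]
            simp [mul_comm]
    have hLle : L * (lam + 1) ≤ (lam + 1) * (dd n).factorization p := by
      calc L * (lam + 1) = (lam + 1) * L := mul_comm _ _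
        _ ≤ _ := Nat.mul_le_mul_left _ hdd
    omega

/-- Lemma 5.2(2): for
`F(t) = b^n · ∏_{q ∣ b} q^{⌊n/(q-1)⌋} · (t + a/b)_n / n!`, any `k' ∈ {0,…,n-1}`,
`k ∈ ℤ`, `λ ≥ 0`: `t + a/b + k'` divides `F`, and
`d_n^{λ+1} · (1/λ!) (d/dt)^λ (F/(t+a/b+k'))` evaluated at `t = -k` is an integer. -/
theorem dn_pow_mul_divided_deriv_quotient_int
    (n : ℕ) (a b : ℤ) (hb : 0 < b)
    (k' : ℕ) (hk' : k' < n) (k : ℤ) (lam : ℕ) :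
    ∃ G : Polynomial ℚ,
      (Polynomial.C ((b : ℚ) ^ n *
          (∏ q ∈ b.natAbs.primeFactors, (q : ℚ) ^ (n / (q - 1))) /
          (Nat.factorial n : ℚ)) *
        ((ascPochhammer ℚ n).comp (Polynomial.X + Polynomial.C ((a : ℚ) / (b : ℚ)))))
        = (Polynomial.X + Polynomial.C ((a : ℚ) / (b : ℚ) + (k' : ℚ))) * G ∧
      ∃ z : ℤ,
        (dd n : ℚ) ^ (lam + 1) * ((1 : ℚ) / (Nat.factorial lam : ℚ)) *
          (((fun Q : Polynomial ℚ => Polynomial.derivative Q)^[lam] G).eval (-(k : ℚ)))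
          = (z : ℚ) := by
  have hn : 0 < n := lt_of_le_of_lt (Nat.zero_le _) hk'
  have hbne : (b : ℚ) ≠ 0 := Int.cast_ne_zero.mpr hb.ne'
  set x : ℚ := (a : ℚ) / (b : ℚ) with hx
  set PQ : ℚ := ∏ q ∈ b.natAbs.primeFactors, (q : ℚ) ^ (n / (q - 1)) with hPQ
  set PN : ℕ := ∏ q ∈ b.natAbs.primeFactors, (q : ℕ) ^ (n / (q - 1)) with hPN
  have hPQN : PQ = (PN : ℚ) := by rw [hPQ, hPN]; push_cast; rfl
  set c : ℚ := (b : ℚ) ^ n * PQ / (Nat.factorial n : ℚ) with hc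
  set I : Finset ℕ := (Finset.range n).erase k' with hI
  have hIcard : I.card = n - 1 := by
    rw [hI, Finset.card_erase_of_mem (Finset.mem_range.mpr hk'), Finset.card_range]
  refine ⟨C c * ∏ i ∈ I, (X + C (x + (i : ℚ))), ?_, ?_⟩
  · -- the division statement
    rw [asc_prod, Polynomial.prod_comp]
    have : ∀ i ∈ Finset.range n, (X + C (i : ℚ)).comp (X + C x) = X + C (x + (i : ℚ)) := by
      intro i _
      rw [add_comp, X_comp, C_comp, add_assoc, ← C_add]
    rw [Finset.prod_congr rfl this,
      ← Finset.mul_prod_erase (Finset.range n) _ (Finset.mem_range.mpr hk')]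
    ring
  · -- integrality
    set G : ℚ[X] := C c * ∏ i ∈ I, (X + C (x + (i : ℚ))) with hG
    have hlamfac : (Nat.factorial lam : ℚ) ≠ 0 := Nat.cast_ne_zero.mpr (Nat.factorial_ne_zero _)
    have h1 : (fun Q : ℚ[X] => derivative Q)^[lam] G = (lam.factorial • hasseDeriv lam) G := by
      rw [Polynomial.factorial_smul_hasseDeriv]
    have h2 : ((lam.factorial • hasseDeriv lam) G).eval (-(k : ℚ))
        = (lam.factorial : ℚ) * (taylor (-(k : ℚ)) G).coeff lam := by
      rw [LinearMap.smul_apply, Polynomial.eval_smul, taylor_coeff, nsmul_eq_mul]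
    have h3 : taylor (-(k : ℚ)) G = C c * ∏ i ∈ I, (X + C (x + (i : ℚ) - (k : ℚ))) := by
      rw [hG, taylor_apply, mul_comp, C_comp, Polynomial.prod_comp]
      congr 1
      refine Finset.prod_congr rfl fun i _ => ?_
      rw [add_comp, X_comp, C_comp, add_assoc, ← C_add]
      congr 1
      ring
    by_cases hlam : lam ≤ n - 1
    swap
    · -- high derivative: everything vanishes
      refine ⟨0, ?_⟩
      have hdeg : (taylor (-(k : ℚ)) G).natDegree < lam := by
        rw [natDegree_taylor, hG]
        calc (C c * ∏ i ∈ I, (X + C (x + (i : ℚ)))).natDegree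
            ≤ (C c).natDegree + (∏ i ∈ I, (X + C (x + (i : ℚ)))).natDegree :=
              natDegree_mul_le
          _ ≤ 0 + ∑ i ∈ I, (X + C (x + (i : ℚ))).natDegree := by
              gcongr
              · exact le_of_eq (natDegree_C _)
              · exact natDegree_prod_le _ _
          _ ≤ ∑ i ∈ I, 1 := by
              simp only [zero_add]
              exact Finset.sum_le_sum fun i _ => le_of_eq (natDegree_X_add_C _)
          _ = n - 1 := by rw [Finset.sum_const, smul_eq_mul, mul_one, hIcard]
          _ < lam := by omega
      rw [h1, h2, coeff_eq_zero_of_natDegree_lt hdeg]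
      simp
    · -- main case
      set m : ℕ := n - 1 - lam with hm
      have hcoeff : (taylor (-(k : ℚ)) G).coeff lam
          = c * ∑ t ∈ I.powersetCard m, ∏ i ∈ t, (x + (i : ℚ) - (k : ℚ)) := by
        rw [h3, Polynomial.coeff_C_mul,
          Finset.prod_X_add_C_coeff I _ (by rw [hIcard]; exact hlam), hIcard]
      set a' : ℤ := a - k * b with ha'
      -- each subset product is an integer over b^m
      have hterm : ∀ t ∈ I.powersetCard m, ∏ i ∈ t, (x + (i : ℚ) - (k : ℚ))
          = ((∏ i ∈ t, (a' + (i : ℤ) * b) : ℤ) : ℚ) / (b : ℚ) ^ m := by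
        intro t ht
        obtain ⟨hts, htc⟩ := Finset.mem_powersetCard.mp ht
        have hfeq : ∀ i ∈ t, x + (i : ℚ) - (k : ℚ) = (((a' + (i : ℤ) * b : ℤ)) : ℚ) / (b : ℚ) := by
          intro i _
          rw [hx, ha']
          push_cast
          field_simp
          ring
        rw [Finset.prod_congr rfl hfeq, Finset.prod_div_distrib, Finset.prod_const, htc]
        push_cast
        ring
      set N : Finset ℕ → ℤ := fun t =>
        (dd n : ℤ) ^ (lam + 1) * (b : ℤ) ^ (lam + 1) * (PN : ℤ) * ∏ i ∈ t, (a' + (i : ℤ) * b)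
        with hN
      have hdvd : ∀ t ∈ I.powersetCard m, (n.factorial : ℤ) ∣ N t := by
        intro t ht
        obtain ⟨hts, htc⟩ := Finset.mem_powersetCard.mp ht
        refine key_dvd n lam hn b hb.ne' a' t (hts.trans (Finset.erase_subset _ _)) ?_
        rw [htc, hm]
        omega
      have hdvdsum : (n.factorial : ℤ) ∣ ∑ t ∈ I.powersetCard m, N t :=
        Finset.dvd_sum hdvd
      obtain ⟨z, hz⟩ := hdvdsum
      refine ⟨z, ?_⟩
      have hnfac : (n.factorial : ℚ) ≠ 0 := Nat.cast_ne_zero.mpr (Nat.factorial_ne_zero _)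
      have hbpow : (b : ℚ) ^ n = (b : ℚ) ^ (lam + 1) * (b : ℚ) ^ m := by
        rw [← pow_add]
        congr 1
        omega
      rw [h1, h2, hcoeff]
      -- reduce to a sum identity
      have heq : ∀ t ∈ I.powersetCard m,
          (dd n : ℚ) ^ (lam + 1) * c * (∏ i ∈ t, (x + (i : ℚ) - (k : ℚ)))
          = ((N t : ℤ) : ℚ) / (n.factorial : ℚ) := by
        intro t ht
        rw [hterm t ht, hN, hc, hPQN, hbpow]
        have hbm : (b : ℚ) ^ m ≠ 0 := pow_ne_zero _ hbne
        push_cast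
        field_simp
        ring_nf
        congr 1
        exact Finset.prod_congr rfl fun i _ => by ring
      calc (dd n : ℚ) ^ (lam + 1) * ((1 : ℚ) / (lam.factorial : ℚ)) *
            ((lam.factorial : ℚ) * (c * ∑ t ∈ I.powersetCard m, ∏ i ∈ t, (x + (i : ℚ) - (k : ℚ))))
          = ∑ t ∈ I.powersetCard m,
              (dd n : ℚ) ^ (lam + 1) * c * (∏ i ∈ t, (x + (i : ℚ) - (k : ℚ))) := by
            rw [← Finset.mul_sum]
            field_simp
        _ = ∑ t ∈ I.powersetCard m, ((N t : ℤ) : ℚ) / (n.factorial : ℚ) :=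
            Finset.sum_congr rfl heq
        _ = ((∑ t ∈ I.powersetCard m, N t : ℤ) : ℚ) / (n.factorial : ℚ) := by
            rw [← Finset.sum_div]
            push_cast
            ring
        _ = (z : ℚ) := by
            rw [hz]
            push_cast
            field_simp
end
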